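/- arXiv:2006.08484 — 3 statements merged into one kernel-verified Lean document; each statement's English description precedes it below -/
import Mathlib

section
/- Let A ∈ ℝ^{m×n}, b ∈ ℝᵐ, c ∈ ℝⁿ, and consider the bilinear saddle function f(x,y) = cᵀx + yᵀAx + bᵀy on ℝⁿ × ℝᵐ admitting a saddle point (x*, y*). Let σ be the minimum nonzero singular value of A, let W* be the set of saddle points, and for w = (x,y) let r* = dist₂(w, W*). Then σ·(r*)² ≤ Δ_{r*}(w), where Δ_r(w) = sup_{‖(x',y') − w‖₂ ≤ r} [f(x, y') − f(x', y)]. -/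
open Matrix

section AuxSaddle

lemma aux_dot_transpose_mul {k n : ℕ} (M : Matrix (Fin k) (Fin n) ℝ) (x : Fin n → ℝ) :
    x ⬝ᵥ ((Mᵀ * M) *ᵥ x) = (M *ᵥ x) ⬝ᵥ (M *ᵥ x) := by
  rw [← mulVec_mulVec, dotProduct_mulVec, vecMul_transpose]

lemma aux_real_transpose_eq {k n : ℕ} (M : Matrix (Fin k) (Fin n) ℝ) : Mᴴ = Mᵀ := by
  ext i j; simp [conjTranspose_apply]

lemma aux_inner_eq_dot {n : ℕ} (x y : EuclideanSpace ℝ (Fin n)) :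
    (inner ℝ x y : ℝ) = (x : Fin n → ℝ) ⬝ᵥ (y : Fin n → ℝ) := by
  simp [PiLp.inner_apply, dotProduct, RCLike.inner_apply, mul_comm]

lemma aux_dot_self_nonneg {n : ℕ} (x : Fin n → ℝ) : 0 ≤ x ⬝ᵥ x :=
  Finset.sum_nonneg fun i _ => mul_self_nonneg _

lemma aux_dot_self_pos {n : ℕ} {x : Fin n → ℝ} (hx : x ≠ 0) : 0 < x ⬝ᵥ x :=
  lt_of_le_of_ne (aux_dot_self_nonneg x)
    (fun h => hx (dotProduct_self_eq_zero.mp h.symm))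

lemma aux_sumsq {n : ℕ} (x : Fin n → ℝ) : ∑ i, x i ^ 2 = x ⬝ᵥ x := by
  simp [dotProduct, sq]

/-- Two-block Cauchy–Schwarz. -/
lemma aux_cs2 {n m : ℕ} (a u : Fin n → ℝ) (e v : Fin m → ℝ) :
    a ⬝ᵥ u + e ⬝ᵥ v ≤ Real.sqrt (a ⬝ᵥ a + e ⬝ᵥ e) * Real.sqrt (u ⬝ᵥ u + v ⬝ᵥ v) := by
  have hcs := Finset.sum_mul_sq_le_sq_mul_sq Finset.univ (Sum.elim a e) (Sum.elim u v)
  rw [Fintype.sum_sum_type, Fintype.sum_sum_type, Fintype.sum_sum_type] at hcs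
  simp only [Sum.elim_inl, Sum.elim_inr] at hcs
  rw [aux_sumsq, aux_sumsq, aux_sumsq, aux_sumsq] at hcs
  have hLHS : (∑ i, a i * u i) + ∑ j, e j * v j = a ⬝ᵥ u + e ⬝ᵥ v := rfl
  rw [hLHS] at hcs
  have h1 : 0 ≤ a ⬝ᵥ a + e ⬝ᵥ e := add_nonneg (aux_dot_self_nonneg a) (aux_dot_self_nonneg e)
  calc a ⬝ᵥ u + e ⬝ᵥ v ≤ |a ⬝ᵥ u + e ⬝ᵥ v| := le_abs_self _
    _ = Real.sqrt ((a ⬝ᵥ u + e ⬝ᵥ v) ^ 2) := (Real.sqrt_sq_eq_abs _).symm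
    _ ≤ Real.sqrt ((a ⬝ᵥ a + e ⬝ᵥ e) * (u ⬝ᵥ u + v ⬝ᵥ v)) := Real.sqrt_le_sqrt hcs
    _ = _ := Real.sqrt_mul h1 _

/-- Key spectral lemma: given a lower bound `σ²` on the nonzero eigenvalues of `MᵀM`,
any vector `d` can be replaced by `z` with the same image and `σ²‖z‖² ≤ ‖Md‖²`. -/
lemma aux_key_lemma {k n : ℕ} (M : Matrix (Fin k) (Fin n) ℝ) (σ : ℝ)
    (h : ∀ (lam : ℝ) (v : Fin n → ℝ), v ≠ 0 → (Mᵀ * M) *ᵥ v = lam • v → lam = 0 ∨ σ ^ 2 ≤ lam)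
    (d : Fin n → ℝ) :
    ∃ z : Fin n → ℝ, M *ᵥ z = M *ᵥ d ∧ σ ^ 2 * (z ⬝ᵥ z) ≤ (M *ᵥ d) ⬝ᵥ (M *ᵥ d) := by
  classical
  have hS : (Mᵀ * M).IsHermitian := by
    have := isHermitian_conjTranspose_mul_self M
    rwa [aux_real_transpose_eq] at this
  set B := hS.eigenvectorBasis with hB
  set μ := hS.eigenvalues with hμ
  have hmv : ∀ j, (Mᵀ * M) *ᵥ ⇑(B j) = μ j • ⇑(B j) := fun j => hS.mulVec_eigenvectorBasis j
  have hBne : ∀ j, (⇑(B j) : Fin n → ℝ) ≠ 0 := by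
    intro j hj
    exact B.orthonormal.ne_zero j (by ext i; exact congrFun hj i)
  have hbound : ∀ j, μ j = 0 ∨ σ ^ 2 ≤ μ j := fun j => h (μ j) _ (hBne j) (hmv j)
  set d' : EuclideanSpace ℝ (Fin n) := WithLp.toLp 2 d with hd'
  set cfun : Fin n → ℝ := fun j => inner ℝ (B j) d' with hc
  have hrepr : ∑ j, cfun j • (⇑(B j) : Fin n → ℝ) = d := by
    have := congrArg WithLp.ofLp (B.sum_repr' d')
    rw [WithLp.ofLp_sum] at this
    simpa only [WithLp.ofLp_smul] using this
  set t : Finset (Fin n) := Finset.univ.filter (fun j => μ j ≠ 0) with ht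
  have expand : ∀ s : Finset (Fin n),
      (Mᵀ * M) *ᵥ (∑ j ∈ s, cfun j • (⇑(B j) : Fin n → ℝ))
        = ∑ j ∈ s, (μ j * cfun j) • (⇑(B j) : Fin n → ℝ) := by
    intro s
    rw [← mulVecLin_apply, map_sum]
    refine Finset.sum_congr rfl fun j _ => ?_
    rw [_root_.map_smul, mulVecLin_apply, hmv j, smul_smul, mul_comm]
  set z : Fin n → ℝ := ∑ j ∈ t, cfun j • (⇑(B j) : Fin n → ℝ) with hz
  have hSz : (Mᵀ * M) *ᵥ z = (Mᵀ * M) *ᵥ d := by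
    rw [hz, expand t, ← hrepr, expand Finset.univ]
    refine Finset.sum_subset (Finset.subset_univ t) fun j _ hj => ?_
    rw [ht, Finset.mem_filter] at hj
    push_neg at hj
    rw [hj (Finset.mem_univ j), zero_mul, zero_smul]
  have hMz : M *ᵥ z = M *ᵥ d := by
    have h0 : (Mᵀ * M) *ᵥ (d - z) = 0 := by rw [mulVec_sub, hSz, sub_self]
    have h1 : (M *ᵥ (d - z)) ⬝ᵥ (M *ᵥ (d - z)) = 0 := by
      rw [← aux_dot_transpose_mul, h0, dotProduct_zero]
    have h2 : M *ᵥ (d - z) = 0 := dotProduct_self_eq_zero.mp h1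
    rw [mulVec_sub] at h2
    rw [← sub_eq_zero, ← neg_sub (M *ᵥ d) (M *ᵥ z), h2, neg_zero]
  refine ⟨z, hMz, ?_⟩
  have hz' : z = (⇑(∑ j ∈ t, cfun j • B j : EuclideanSpace ℝ (Fin n)) : Fin n → ℝ) := by
    rw [WithLp.ofLp_sum]; simp only [WithLp.ofLp_smul]; rfl
  have hzz : z ⬝ᵥ z = ∑ j ∈ t, cfun j * cfun j := by
    rw [hz', ← aux_inner_eq_dot]
    exact B.orthonormal.inner_sum cfun cfun t
  have hSzz : z ⬝ᵥ ((Mᵀ * M) *ᵥ z) = ∑ j ∈ t, cfun j * (μ j * cfun j) := by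
    have e1 : (Mᵀ * M) *ᵥ z
        = (⇑(∑ j ∈ t, (μ j * cfun j) • B j : EuclideanSpace ℝ (Fin n)) : Fin n → ℝ) := by
      rw [hz, expand t, WithLp.ofLp_sum]; simp only [WithLp.ofLp_smul]
    rw [e1, hz', ← aux_inner_eq_dot]
    exact B.orthonormal.inner_sum cfun (fun j => μ j * cfun j) t
  have hfinal : (M *ᵥ d) ⬝ᵥ (M *ᵥ d) = ∑ j ∈ t, cfun j * (μ j * cfun j) := by
    rw [← hMz, ← aux_dot_transpose_mul, hSzz]
  rw [hfinal, hzz, Finset.mul_sum]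
  refine Finset.sum_le_sum fun j hj => ?_
  rw [ht, Finset.mem_filter] at hj
  rcases hbound j with h0 | hge
  · exact absurd h0 hj.2
  · nlinarith [sq_nonneg (cfun j)]

end AuxSaddle

/-- Error bound for bilinear saddle functions in terms of the minimum
nonzero singular value of the coupling matrix. -/
theorem stmt2 (n m : ℕ) (A : Matrix (Fin m) (Fin n) ℝ) (b : Fin m → ℝ) (c : Fin n → ℝ)
    (f : (Fin n → ℝ) → (Fin m → ℝ) → ℝ)
    (hf : ∀ x y, f x y = c ⬝ᵥ x + y ⬝ᵥ A.mulVec x + b ⬝ᵥ y)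
    (xs : Fin n → ℝ) (ys : Fin m → ℝ)
    (hsaddle : ∀ x y, f xs y ≤ f xs ys ∧ f xs ys ≤ f x ys)
    (σ : ℝ)
    (hσ : IsLeast {s : ℝ | 0 < s ∧ ∃ v : Fin n → ℝ, v ≠ 0 ∧
      (Aᵀ * A).mulVec v = (s ^ 2) • v} σ)
    (Wstar : Set ((Fin n → ℝ) × (Fin m → ℝ)))
    (hW : Wstar = {p | ∀ x y, f p.1 y ≤ f p.1 p.2 ∧ f p.1 p.2 ≤ f x p.2})
    (enorm : ((Fin n → ℝ) × (Fin m → ℝ)) → ℝ)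
    (hen : ∀ p, enorm p = Real.sqrt (∑ i, p.1 i ^ 2 + ∑ j, p.2 j ^ 2))
    (w : (Fin n → ℝ) × (Fin m → ℝ)) (rstar : ℝ)
    (hr : rstar = sInf {d : ℝ | ∃ p ∈ Wstar, d = enorm (w - p)})
    (Δ : ℝ) (hΔ : Δ = sSup {g : ℝ | ∃ p : (Fin n → ℝ) × (Fin m → ℝ),
      enorm (p - w) ≤ rstar ∧ g = f w.1 p.2 - f p.1 w.2}) :
    σ * rstar ^ 2 ≤ Δ := by
  classical
  have hσ0 : 0 < σ := hσ.1.1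
  -- saddle point equations for (xs, ys)
  have hxs : A *ᵥ xs = -b := by
    have h1 := (hsaddle xs (ys + (A *ᵥ xs + b))).1
    rw [hf, hf] at h1
    set r := A *ᵥ xs + b with hrd
    have e1 : (ys + r) ⬝ᵥ (A *ᵥ xs) = ys ⬝ᵥ (A *ᵥ xs) + r ⬝ᵥ (A *ᵥ xs) := add_dotProduct _ _ _
    have e2 : b ⬝ᵥ (ys + r) = b ⬝ᵥ ys + b ⬝ᵥ r := dotProduct_add _ _ _
    have e3 : r ⬝ᵥ r = r ⬝ᵥ (A *ᵥ xs) + b ⬝ᵥ r := by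
      rw [hrd, dotProduct_add, dotProduct_comm b]
    rw [e1, e2] at h1
    have h2 : r ⬝ᵥ r ≤ 0 := by linarith
    have h3 : r = 0 := dotProduct_self_eq_zero.mp (le_antisymm h2 (aux_dot_self_nonneg r))
    rw [hrd] at h3
    exact eq_neg_of_add_eq_zero_left h3
  have hys : Aᵀ *ᵥ ys = -c := by
    have h1 := (hsaddle (xs - (Aᵀ *ᵥ ys + c)) ys).2
    rw [hf, hf] at h1
    set r := Aᵀ *ᵥ ys + c with hrd
    have e1 : c ⬝ᵥ (xs - r) = c ⬝ᵥ xs - c ⬝ᵥ r := dotProduct_sub _ _ _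
    have e2 : ys ⬝ᵥ (A *ᵥ (xs - r)) = ys ⬝ᵥ (A *ᵥ xs) - (Aᵀ *ᵥ ys) ⬝ᵥ r := by
      rw [mulVec_sub, dotProduct_sub, dotProduct_mulVec ys A r, ← mulVec_transpose]
    have e3 : r ⬝ᵥ r = (Aᵀ *ᵥ ys) ⬝ᵥ r + c ⬝ᵥ r := by
      rw [hrd, add_dotProduct]
    rw [e1, e2] at h1
    have h2 : r ⬝ᵥ r ≤ 0 := by linarith
    have h3 : r = 0 := dotProduct_self_eq_zero.mp (le_antisymm h2 (aux_dot_self_nonneg r))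
    rw [hrd] at h3
    exact eq_neg_of_add_eq_zero_left h3
  -- residuals
  set u : Fin n → ℝ := Aᵀ *ᵥ w.2 + c with hu
  set v : Fin m → ℝ := A *ᵥ w.1 + b with hv
  set N2 : ℝ := u ⬝ᵥ u + v ⬝ᵥ v with hN2
  set N : ℝ := Real.sqrt N2 with hN
  have hN2nonneg : 0 ≤ N2 := add_nonneg (aux_dot_self_nonneg u) (aux_dot_self_nonneg v)
  have hNnonneg : 0 ≤ N := Real.sqrt_nonneg _
  have hNN : N * N = N2 := Real.mul_self_sqrt hN2nonneg
  -- gap identity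
  have gap : ∀ p : (Fin n → ℝ) × (Fin m → ℝ),
      f w.1 p.2 - f p.1 w.2 = (w.1 - p.1) ⬝ᵥ u + (p.2 - w.2) ⬝ᵥ v := by
    intro p
    have k1 : ∀ x : Fin n → ℝ, x ⬝ᵥ (Aᵀ *ᵥ w.2) = w.2 ⬝ᵥ (A *ᵥ x) := by
      intro x
      rw [dotProduct_mulVec x Aᵀ w.2, vecMul_transpose, dotProduct_comm]
    rw [hf, hf, hu, hv]
    simp only [sub_dotProduct, dotProduct_add]
    rw [k1 w.1, k1 p.1, dotProduct_comm w.1 c, dotProduct_comm p.1 c,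
      dotProduct_comm p.2 b, dotProduct_comm w.2 b]
    ring
  -- membership in Wstar
  have memW : ∀ p : (Fin n → ℝ) × (Fin m → ℝ),
      A *ᵥ p.1 = -b → Aᵀ *ᵥ p.2 = -c → p ∈ Wstar := by
    intro p h1 h2
    have e1 : ∀ y, f p.1 y = c ⬝ᵥ p.1 := by
      intro y
      rw [hf, h1, dotProduct_neg, dotProduct_comm b y]
      ring
    have e2 : ∀ x, f x p.2 = b ⬝ᵥ p.2 := by
      intro x
      rw [hf, dotProduct_mulVec p.2 A x, ← mulVec_transpose, h2, neg_dotProduct]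
      ring
    rw [hW]
    intro x y
    constructor
    · rw [e1 y, e1 p.2]
    · rw [e2 x, e2 p.1]
  have hxyW : (xs, ys) ∈ Wstar := memW (xs, ys) hxs hys
  -- lower bounds for the distance set
  set D : Set ℝ := {d : ℝ | ∃ p ∈ Wstar, d = enorm (w - p)} with hD
  have hDbdd : BddBelow D := by
    refine ⟨0, ?_⟩
    rintro d ⟨p, hp, rfl⟩
    rw [hen]
    exact Real.sqrt_nonneg _
  have hDne : D.Nonempty := ⟨enorm (w - (xs, ys)), ⟨(xs, ys), hxyW, rfl⟩⟩
  have hr0 : 0 ≤ rstar := by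
    rw [hr]
    apply le_csInf hDne
    rintro d ⟨p, hp, rfl⟩
    rw [hen]
    exact Real.sqrt_nonneg _
  -- eigenvalue hypotheses for the key lemma
  have hypA : ∀ (lam : ℝ) (vv : Fin n → ℝ), vv ≠ 0 →
      (Aᵀ * A) *ᵥ vv = lam • vv → lam = 0 ∨ σ ^ 2 ≤ lam := by
    intro lam vv hvv he
    by_cases h0 : lam = 0
    · exact Or.inl h0
    right
    have h1 := aux_dot_transpose_mul A vv
    rw [he, dotProduct_smul, smul_eq_mul] at h1
    have h2 : 0 < vv ⬝ᵥ vv := aux_dot_self_pos hvv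
    have h3 : 0 ≤ (A *ᵥ vv) ⬝ᵥ (A *ᵥ vv) := aux_dot_self_nonneg _
    have hpos : 0 < lam := by
      rcases lt_trichotomy lam 0 with hl | hl | hl
      · nlinarith
      · exact absurd hl h0
      · exact hl
    have hmem : Real.sqrt lam ∈ {s : ℝ | 0 < s ∧ ∃ v : Fin n → ℝ, v ≠ 0 ∧
        (Aᵀ * A).mulVec v = (s ^ 2) • v} :=
      ⟨Real.sqrt_pos.mpr hpos, vv, hvv, by rw [Real.sq_sqrt hpos.le]; exact he⟩
    have hle := hσ.2 hmem
    calc σ ^ 2 ≤ Real.sqrt lam ^ 2 := pow_le_pow_left₀ hσ0.le hle 2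
      _ = lam := Real.sq_sqrt hpos.le
  have hypAT : ∀ (lam : ℝ) (vv : Fin m → ℝ), vv ≠ 0 →
      (Aᵀᵀ * Aᵀ) *ᵥ vv = lam • vv → lam = 0 ∨ σ ^ 2 ≤ lam := by
    intro lam vv hvv he
    rw [transpose_transpose] at he
    by_cases h0 : lam = 0
    · exact Or.inl h0
    right
    have h1 := aux_dot_transpose_mul Aᵀ vv
    rw [transpose_transpose, he, dotProduct_smul, smul_eq_mul] at h1
    have h2 : 0 < vv ⬝ᵥ vv := aux_dot_self_pos hvv
    have h3 : 0 ≤ (Aᵀ *ᵥ vv) ⬝ᵥ (Aᵀ *ᵥ vv) := aux_dot_self_nonneg _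
    have hpos : 0 < lam := by
      rcases lt_trichotomy lam 0 with hl | hl | hl
      · nlinarith
      · exact absurd hl h0
      · exact hl
    have huu : Aᵀ *ᵥ vv ≠ 0 := by
      intro hz
      have : (A * Aᵀ) *ᵥ vv = 0 := by rw [← mulVec_mulVec, hz, mulVec_zero]
      rw [he] at this
      rcases smul_eq_zero.mp this with h | h
      · exact h0 h
      · exact hvv h
    have heig : (Aᵀ * A) *ᵥ (Aᵀ *ᵥ vv) = lam • (Aᵀ *ᵥ vv) := by
      rw [← mulVec_mulVec, mulVec_mulVec vv A Aᵀ, he, mulVec_smul]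
    have hmem : Real.sqrt lam ∈ {s : ℝ | 0 < s ∧ ∃ v : Fin n → ℝ, v ≠ 0 ∧
        (Aᵀ * A).mulVec v = (s ^ 2) • v} :=
      ⟨Real.sqrt_pos.mpr hpos, Aᵀ *ᵥ vv, huu, by rw [Real.sq_sqrt hpos.le]; exact heig⟩
    have hle := hσ.2 hmem
    calc σ ^ 2 ≤ Real.sqrt lam ^ 2 := pow_le_pow_left₀ hσ0.le hle 2
      _ = lam := Real.sq_sqrt hpos.le
  -- Hoffman-type bound: σ * rstar ≤ N
  obtain ⟨z1, hz1e, hz1b⟩ := aux_key_lemma A σ hypA (w.1 - xs)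
  obtain ⟨z2, hz2e, hz2b⟩ := aux_key_lemma Aᵀ σ hypAT (w.2 - ys)
  have hvd : A *ᵥ (w.1 - xs) = v := by
    rw [mulVec_sub, hxs, sub_neg_eq_add, hv]
  have hud : Aᵀ *ᵥ (w.2 - ys) = u := by
    rw [mulVec_sub, hys, sub_neg_eq_add, hu]
  have hAz1 : A *ᵥ z1 = v := by rw [hz1e, hvd]
  have hAz2 : Aᵀ *ᵥ z2 = u := by rw [hz2e, hud]
  have hz1b' : σ ^ 2 * (z1 ⬝ᵥ z1) ≤ v ⬝ᵥ v := by rw [← hvd]; exact hz1b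
  have hz2b' : σ ^ 2 * (z2 ⬝ᵥ z2) ≤ u ⬝ᵥ u := by rw [← hud]; exact hz2b
  set p0 : (Fin n → ℝ) × (Fin m → ℝ) := (w.1 - z1, w.2 - z2) with hp0
  have hp0W : p0 ∈ Wstar := by
    refine memW p0 ?_ ?_
    · show A *ᵥ (w.1 - z1) = -b
      rw [mulVec_sub, hAz1, hv]
      abel
    · show Aᵀ *ᵥ (w.2 - z2) = -c
      rw [mulVec_sub, hAz2, hu]
      abel
  have hdist : enorm (w - p0) = Real.sqrt (z1 ⬝ᵥ z1 + z2 ⬝ᵥ z2) := by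
    rw [hen]
    congr 1
    have e1 : (w - p0).1 = z1 := by
      show w.1 - (w.1 - z1) = z1
      abel
    have e2 : (w - p0).2 = z2 := by
      show w.2 - (w.2 - z2) = z2
      abel
    rw [e1, e2, aux_sumsq, aux_sumsq]
  have hrleN : rstar ≤ N / σ := by
    have hmemD : enorm (w - p0) ∈ D := ⟨p0, hp0W, rfl⟩
    have hstep : enorm (w - p0) ≤ N / σ := by
      rw [hdist]
      have hb : z1 ⬝ᵥ z1 + z2 ⬝ᵥ z2 ≤ (N / σ) ^ 2 := by
        have hσ2 : (0:ℝ) < σ ^ 2 := by positivity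
        have : σ ^ 2 * (z1 ⬝ᵥ z1 + z2 ⬝ᵥ z2) ≤ N2 := by
          rw [hN2]; linarith
        rw [div_pow]
        rw [le_div_iff₀ hσ2]
        calc (z1 ⬝ᵥ z1 + z2 ⬝ᵥ z2) * σ ^ 2 = σ ^ 2 * (z1 ⬝ᵥ z1 + z2 ⬝ᵥ z2) := by ring
          _ ≤ N2 := this
          _ = N ^ 2 := by rw [← hNN]; ring
      calc Real.sqrt (z1 ⬝ᵥ z1 + z2 ⬝ᵥ z2) ≤ Real.sqrt ((N / σ) ^ 2) := Real.sqrt_le_sqrt hb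
        _ = N / σ := Real.sqrt_sq (by positivity)
    rw [hr]
    exact le_trans (csInf_le hDbdd hmemD) hstep
  have hσrN : σ * rstar ≤ N := by
    have := mul_le_mul_of_nonneg_left hrleN hσ0.le
    rwa [mul_div_cancel₀ N hσ0.ne'] at this
  -- the gap set and its upper bound
  set Sgap : Set ℝ := {g : ℝ | ∃ p : (Fin n → ℝ) × (Fin m → ℝ),
      enorm (p - w) ≤ rstar ∧ g = f w.1 p.2 - f p.1 w.2} with hSgap
  have hub : ∀ g ∈ Sgap, g ≤ rstar * N := by
    rintro g ⟨p, hpe, rfl⟩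
    rw [gap p]
    have hcs := aux_cs2 (w.1 - p.1) u (p.2 - w.2) v
    have hnorm : Real.sqrt ((w.1 - p.1) ⬝ᵥ (w.1 - p.1) + (p.2 - w.2) ⬝ᵥ (p.2 - w.2))
        = enorm (p - w) := by
      rw [hen]
      congr 1
      have e1 : (p - w).1 = p.1 - w.1 := rfl
      have e2 : (p - w).2 = p.2 - w.2 := rfl
      rw [e1, e2, aux_sumsq, aux_sumsq]
      have e3 : (p.1 - w.1) ⬝ᵥ (p.1 - w.1) = (w.1 - p.1) ⬝ᵥ (w.1 - p.1) := by
        rw [show w.1 - p.1 = -(p.1 - w.1) by abel, neg_dotProduct, dotProduct_neg, neg_neg]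
      rw [e3]
    rw [hnorm] at hcs
    calc (w.1 - p.1) ⬝ᵥ u + (p.2 - w.2) ⬝ᵥ v ≤ enorm (p - w) * Real.sqrt (u ⬝ᵥ u + v ⬝ᵥ v) := hcs
      _ ≤ rstar * N := by
        rw [hN, hN2]
        apply mul_le_mul_of_nonneg_right hpe (Real.sqrt_nonneg _)
  have hbdd : BddAbove Sgap := ⟨rstar * N, hub⟩
  -- main inequality
  by_cases hN0 : N2 = 0
  · -- degenerate case: residual is zero, w is a saddle point, rstar = 0
    have hNz : N = 0 := by rw [hN, hN0, Real.sqrt_zero]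
    have hrz : rstar = 0 := le_antisymm (by
      have := hσrN
      rw [hNz] at this
      nlinarith) hr0
    have h0mem : (0:ℝ) ∈ Sgap := by
      refine ⟨w, ?_, by ring⟩
      have : w - w = 0 := sub_self w
      rw [this, hen]
      have e0 : ∑ i, (0 : (Fin n → ℝ) × (Fin m → ℝ)).1 i ^ 2
          + ∑ j, (0 : (Fin n → ℝ) × (Fin m → ℝ)).2 j ^ 2 = 0 := by
        simp
      rw [e0, Real.sqrt_zero]
      exact hr0
    have : (0:ℝ) ≤ Δ := by
      rw [hΔ]
      exact le_csSup hbdd h0mem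
    rw [hrz]
    nlinarith
  · have hN2pos : 0 < N2 := lt_of_le_of_ne hN2nonneg (Ne.symm hN0)
    have hNpos : 0 < N := Real.sqrt_pos.mpr hN2pos
    set τ : ℝ := rstar / N with hτ
    have hτ0 : 0 ≤ τ := div_nonneg hr0 hNnonneg
    set p1 : (Fin n → ℝ) × (Fin m → ℝ) := (w.1 - τ • u, w.2 + τ • v) with hp1
    have he1 : (p1 - w).1 = -(τ • u) := by
      show w.1 - τ • u - w.1 = -(τ • u)
      abel
    have he2 : (p1 - w).2 = τ • v := by
      show w.2 + τ • v - w.2 = τ • v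
      abel
    have hnorm1 : enorm (p1 - w) = rstar := by
      rw [hen, he1, he2, aux_sumsq, aux_sumsq]
      have e3 : -(τ • u) ⬝ᵥ -(τ • u) + (τ • v) ⬝ᵥ (τ • v) = τ ^ 2 * N2 := by
        rw [neg_dotProduct, dotProduct_neg, neg_neg, smul_dotProduct, dotProduct_smul,
          smul_dotProduct, dotProduct_smul, hN2]
        simp [smul_eq_mul]
        ring
      rw [e3, Real.sqrt_mul (sq_nonneg τ), Real.sqrt_sq hτ0, ← hN, hτ,
        div_mul_cancel₀ rstar hNpos.ne']
    have hgv : f w.1 p1.2 - f p1.1 w.2 = rstar * N := by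
      rw [gap p1]
      have e1 : w.1 - p1.1 = τ • u := by
        show w.1 - (w.1 - τ • u) = τ • u
        abel
      have e2 : p1.2 - w.2 = τ • v := by
        show w.2 + τ • v - w.2 = τ • v
        abel
      have hsum : u ⬝ᵥ u + v ⬝ᵥ v = N * N := by rw [hNN]
      rw [e1, e2, smul_dotProduct, smul_dotProduct, smul_eq_mul, smul_eq_mul]
      calc τ * (u ⬝ᵥ u) + τ * (v ⬝ᵥ v) = τ * (u ⬝ᵥ u + v ⬝ᵥ v) := by ring
        _ = (rstar / N) * (N * N) := by rw [hτ, hsum]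
        _ = rstar * N := by field_simp
    have hmem : rstar * N ∈ Sgap := ⟨p1, le_of_eq hnorm1, hgv.symm⟩
    have hΔge : rstar * N ≤ Δ := by
      rw [hΔ]
      exact le_csSup hbdd hmem
    calc σ * rstar ^ 2 = (σ * rstar) * rstar := by ring
      _ ≤ N * rstar := mul_le_mul_of_nonneg_right hσrN hr0
      _ = rstar * N := by ring
      _ ≤ Δ := hΔge
end

section
/- Consider the bilinear function f(x,y) = yᵀΣx on ℝⁿ × ℝᵐ where Σ is a (possibly nonsquare) diagonal matrix with minimum nonzero diagonal entry (in absolute value) σ > 0. Let D be the diagonal matrix with D_ii = 1 if Σ_ii ≠ 0 and 0 otherwise. Then the set of saddle points is W* = {x : Σx = 0} × {y : yᵀΣ = 0}, and for any w = (x,y), dist₂(w, W*)² = ‖Dx‖₂² + ‖Dᵀy‖₂², and sup_{‖u‖₂ ≤ r} [f(x, u_y) − f(u_x, y)] over perturbations u = (u_x − x, u_y − y) centered at w equals r·‖(Σx, Σᵀy)‖₂ ≥ σ·r·‖(Dx, Dᵀy)‖₂. -/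
open Matrix Finset

namespace Stmt3Aux

def ext {n : ℕ} (u : Fin n → ℝ) (k : ℕ) : ℝ := if h : k < n then u ⟨k, h⟩ else 0

lemma sum_fin_eq_range {n N : ℕ} (h : n ≤ N) (F : Fin n → ℝ) :
    ∑ j, F j = ∑ k ∈ Finset.range N, if hk : k < n then F ⟨k, hk⟩ else 0 := by
  rw [← Finset.sum_subset (Finset.range_subset_range.2 h)
      (fun k _ hk => dif_neg (by simpa using hk))]
  rw [← Fin.sum_univ_eq_sum_range]
  exact Finset.sum_congr rfl fun j _ => by rw [dif_pos j.isLt]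

lemma sum_sq_eq_range {n N : ℕ} (h : n ≤ N) (u : Fin n → ℝ) :
    ∑ j, u j ^ 2 = ∑ k ∈ Finset.range N, ext u k ^ 2 := by
  rw [sum_fin_eq_range h (fun j => u j ^ 2)]
  refine Finset.sum_congr rfl fun k _ => ?_
  unfold ext; split <;> simp

lemma mulVec_diag {m n : ℕ} (A : Matrix (Fin m) (Fin n) ℝ)
    (hA : ∀ (i : Fin m) (j : Fin n), (i : ℕ) ≠ (j : ℕ) → A i j = 0)
    (u : Fin n → ℝ) (i : Fin m) :
    A.mulVec u i = if h : (i : ℕ) < n then A i ⟨i, h⟩ * u ⟨i, h⟩ else 0 := by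
  rw [Matrix.mulVec, dotProduct]
  split_ifs with h
  · refine Finset.sum_eq_single ((⟨(i:ℕ), h⟩ : Fin n)) ?_ ?_
    · intro j _ hj
      rw [hA i j (fun e => hj (Fin.ext e.symm)), zero_mul]
    · simp
  · exact Finset.sum_eq_zero fun j _ => by
      rw [hA i j (by omega), zero_mul]

lemma sum_mulVec_sq {m n N : ℕ} (hm : m ≤ N) (A : Matrix (Fin m) (Fin n) ℝ)
    (hA : ∀ (i : Fin m) (j : Fin n), (i : ℕ) ≠ (j : ℕ) → A i j = 0)
    (α : ℕ → ℝ)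
    (hα : ∀ (k : ℕ) (h1 : k < m) (h2 : k < n), A ⟨k, h1⟩ ⟨k, h2⟩ = α k)
    (hα0 : ∀ k, ¬(k < m ∧ k < n) → α k = 0)
    (u : Fin n → ℝ) :
    ∑ i, (A.mulVec u) i ^ 2 = ∑ k ∈ Finset.range N, (α k * ext u k) ^ 2 := by
  rw [sum_fin_eq_range hm (fun i => (A.mulVec u) i ^ 2)]
  refine Finset.sum_congr rfl fun k _ => ?_
  unfold ext
  split_ifs with h1 h2
  · rw [mulVec_diag A hA, dif_pos h2]
    simp only [hα k h1 h2]
  · rw [mulVec_diag A hA, dif_neg (by simpa using h2)]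
    simp
  · rw [hα0 k (by tauto)]; simp
  · rw [hα0 k (by tauto)]; simp

lemma mulVec_eq_zero_iff {m n : ℕ} (A : Matrix (Fin m) (Fin n) ℝ)
    (hA : ∀ (i : Fin m) (j : Fin n), (i : ℕ) ≠ (j : ℕ) → A i j = 0)
    (u : Fin n → ℝ) :
    A.mulVec u = 0 ↔ ∀ (k : ℕ) (h1 : k < m) (h2 : k < n),
      A ⟨k, h1⟩ ⟨k, h2⟩ * u ⟨k, h2⟩ = 0 := by
  constructor
  · intro h k h1 h2
    have := congrFun h ⟨k, h1⟩
    rw [mulVec_diag A hA, dif_pos h2] at this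
    simpa using this
  · intro h
    funext i
    rw [mulVec_diag A hA]
    split_ifs with h2
    · simpa using h i i.isLt h2
    · rfl

lemma cauchy_schwarz {ι : Type*} [Fintype ι] (f g : ι → ℝ) :
    ∑ i, f i * g i ≤ Real.sqrt (∑ i, f i ^ 2) * Real.sqrt (∑ i, g i ^ 2) := by
  have h := Finset.sum_mul_sq_le_sq_mul_sq Finset.univ f g
  calc ∑ i, f i * g i ≤ |∑ i, f i * g i| := le_abs_self _
    _ = Real.sqrt ((∑ i, f i * g i) ^ 2) := (Real.sqrt_sq_eq_abs _).symm
    _ ≤ Real.sqrt ((∑ i, f i ^ 2) * ∑ i, g i ^ 2) := Real.sqrt_le_sqrt h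
    _ = _ := Real.sqrt_mul (Finset.sum_nonneg fun i _ => sq_nonneg _) _

end Stmt3Aux

namespace Stmt3Aux

lemma dot_self_eq_sum_sq {k : ℕ} (v : Fin k → ℝ) : v ⬝ᵥ v = ∑ i, v i ^ 2 := by
  simp [dotProduct, sq]

lemma eq_zero_of_dot_self_nonpos {k : ℕ} (v : Fin k → ℝ) (h : v ⬝ᵥ v ≤ 0) : v = 0 :=
  dotProduct_self_eq_zero.mp
    (le_antisymm h (by rw [dot_self_eq_sum_sq]; exact Finset.sum_nonneg fun i _ => sq_nonneg _))

end Stmt3Aux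

open Stmt3Aux

/-- The diagonal bilinear case: saddle points, distance to optimality, and
the value of the localized gap. -/
theorem stmt3 (n m : ℕ) (S : Matrix (Fin m) (Fin n) ℝ)
    (hdiag : ∀ (i : Fin m) (j : Fin n), (i : ℕ) ≠ (j : ℕ) → S i j = 0)
    (σ : ℝ) (hσpos : 0 < σ)
    (hσ : IsLeast {a : ℝ | ∃ (i : Fin m) (j : Fin n),
      (i : ℕ) = (j : ℕ) ∧ S i j ≠ 0 ∧ a = |S i j|} σ)
    (D : Matrix (Fin m) (Fin n) ℝ)
    (hD : ∀ (i : Fin m) (j : Fin n),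
      D i j = if (i : ℕ) = (j : ℕ) ∧ S i j ≠ 0 then 1 else 0)
    (f : (Fin n → ℝ) → (Fin m → ℝ) → ℝ)
    (hf : ∀ x y, f x y = y ⬝ᵥ S.mulVec x)
    (Wstar : Set ((Fin n → ℝ) × (Fin m → ℝ)))
    (hW : Wstar = {p | ∀ x y, f p.1 y ≤ f p.1 p.2 ∧ f p.1 p.2 ≤ f x p.2})
    (enorm : ((Fin n → ℝ) × (Fin m → ℝ)) → ℝ)
    (hen : ∀ p, enorm p = Real.sqrt (∑ i, p.1 i ^ 2 + ∑ j, p.2 j ^ 2))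
    (w : (Fin n → ℝ) × (Fin m → ℝ)) (r : ℝ) (hr : 0 ≤ r) :
    Wstar = {x | S.mulVec x = 0} ×ˢ {y | Sᵀ.mulVec y = 0} ∧
    (sInf {d : ℝ | ∃ p ∈ Wstar, d = enorm (w - p)}) ^ 2 =
      ∑ i, (D.mulVec w.1) i ^ 2 + ∑ j, (Dᵀ.mulVec w.2) j ^ 2 ∧
    sSup {g : ℝ | ∃ p : (Fin n → ℝ) × (Fin m → ℝ),
        enorm (p - w) ≤ r ∧ g = f w.1 p.2 - f p.1 w.2} =
      r * Real.sqrt (∑ i, (S.mulVec w.1) i ^ 2 + ∑ j, (Sᵀ.mulVec w.2) j ^ 2) ∧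
    σ * r * Real.sqrt (∑ i, (D.mulVec w.1) i ^ 2 + ∑ j, (Dᵀ.mulVec w.2) j ^ 2) ≤
      r * Real.sqrt (∑ i, (S.mulVec w.1) i ^ 2 + ∑ j, (Sᵀ.mulVec w.2) j ^ 2) := by
  -- Part 1
  have part1 : Wstar = {x | S.mulVec x = 0} ×ˢ {y | Sᵀ.mulVec y = 0} := by
    rw [hW]
    ext p
    simp only [Set.mem_setOf_eq, Set.mem_prod]
    constructor
    · intro hp
      constructor
      · have h1 := (hp p.1 (p.2 + S.mulVec p.1)).1
        rw [hf, hf, add_dotProduct] at h1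
        exact eq_zero_of_dot_self_nonpos _ (by linarith)
      · have h1 := (hp (p.1 - Sᵀ.mulVec p.2) p.2).2
        rw [hf, hf, Matrix.mulVec_sub, dotProduct_sub] at h1
        have h2 : p.2 ⬝ᵥ S.mulVec (Sᵀ.mulVec p.2) = (Sᵀ.mulVec p.2) ⬝ᵥ (Sᵀ.mulVec p.2) := by
          rw [Matrix.dotProduct_mulVec, ← Matrix.mulVec_transpose]
        rw [h2] at h1
        exact eq_zero_of_dot_self_nonpos _ (by linarith)
    · rintro ⟨h1, h2⟩ x y
      have hx : f x p.2 = 0 := by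
        rw [hf, Matrix.dotProduct_mulVec, ← Matrix.mulVec_transpose, h2,
          zero_dotProduct]
      have hy : ∀ v, f p.1 v = 0 := fun v => by
        rw [hf, h1, dotProduct_zero]
      rw [hx, hy, hy]
      exact ⟨le_refl 0, le_refl 0⟩
  -- Shared machinery
  set N := m + n with hN
  have hmN : m ≤ N := Nat.le_add_right m n
  have hnN : n ≤ N := Nat.le_add_left n m
  set φ : ℕ → ℝ := fun k => if h : k < m ∧ k < n then S ⟨k, h.1⟩ ⟨k, h.2⟩ else 0 with hφdef
  set ψ : ℕ → ℝ := fun k => if φ k = 0 then 0 else 1 with hψdef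
  have hφ : ∀ (k : ℕ) (h1 : k < m) (h2 : k < n), S ⟨k, h1⟩ ⟨k, h2⟩ = φ k := by
    intro k h1 h2; rw [hφdef]; simp only [dif_pos (And.intro h1 h2)]
  have hφ0 : ∀ k, ¬(k < m ∧ k < n) → φ k = 0 := by
    intro k h; rw [hφdef]; simp only [dif_neg h]
  have hφ0' : ∀ k, φ k ≠ 0 → k < m ∧ k < n := fun k h => by
    by_contra hc; exact h (hφ0 k hc)
  have hψ : ∀ (k : ℕ) (h1 : k < m) (h2 : k < n), D ⟨k, h1⟩ ⟨k, h2⟩ = ψ k := by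
    intro k h1 h2
    rw [hD, hψdef]
    simp only
    rw [← hφ k h1 h2]
    by_cases h : S ⟨k, h1⟩ ⟨k, h2⟩ = 0 <;> simp [h]
  have hψ0 : ∀ k, ¬(k < m ∧ k < n) → ψ k = 0 := by
    intro k h; rw [hψdef]; simp [hφ0 k h]
  have hψ01 : ∀ k, ψ k = 0 ∨ ψ k = 1 := by
    intro k; rw [hψdef]; by_cases h : φ k = 0 <;> simp [h]
  have hDdiag : ∀ (i : Fin m) (j : Fin n), (i : ℕ) ≠ (j : ℕ) → D i j = 0 := by
    intro i j h; rw [hD]; simp [h]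
  have hdiagT : ∀ (j : Fin n) (i : Fin m), (j : ℕ) ≠ (i : ℕ) → Sᵀ j i = 0 :=
    fun j i h => hdiag i j (Ne.symm h)
  have hDdiagT : ∀ (j : Fin n) (i : Fin m), (j : ℕ) ≠ (i : ℕ) → Dᵀ j i = 0 :=
    fun j i h => hDdiag i j (Ne.symm h)
  have hφT : ∀ (k : ℕ) (h2 : k < n) (h1 : k < m), Sᵀ ⟨k, h2⟩ ⟨k, h1⟩ = φ k :=
    fun k h2 h1 => hφ k h1 h2
  have hψT : ∀ (k : ℕ) (h2 : k < n) (h1 : k < m), Dᵀ ⟨k, h2⟩ ⟨k, h1⟩ = ψ k :=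
    fun k h2 h1 => hψ k h1 h2
  have hφ0T : ∀ k, ¬(k < n ∧ k < m) → φ k = 0 := fun k h => hφ0 k (fun hc => h ⟨hc.2, hc.1⟩)
  have hψ0T : ∀ k, ¬(k < n ∧ k < m) → ψ k = 0 := fun k h => hψ0 k (fun hc => h ⟨hc.2, hc.1⟩)
  have ES : ∀ u : Fin n → ℝ, ∑ i, (S.mulVec u) i ^ 2
      = ∑ k ∈ Finset.range N, (φ k * ext u k) ^ 2 :=
    fun u => sum_mulVec_sq hmN S hdiag φ hφ hφ0 u
  have EST : ∀ v : Fin m → ℝ, ∑ j, (Sᵀ.mulVec v) j ^ 2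
      = ∑ k ∈ Finset.range N, (φ k * ext v k) ^ 2 :=
    fun v => sum_mulVec_sq hnN Sᵀ hdiagT φ hφT hφ0T v
  have ED : ∀ u : Fin n → ℝ, ∑ i, (D.mulVec u) i ^ 2
      = ∑ k ∈ Finset.range N, (ψ k * ext u k) ^ 2 :=
    fun u => sum_mulVec_sq hmN D hDdiag ψ hψ hψ0 u
  have EDT : ∀ v : Fin m → ℝ, ∑ j, (Dᵀ.mulVec v) j ^ 2
      = ∑ k ∈ Finset.range N, (ψ k * ext v k) ^ 2 :=
    fun v => sum_mulVec_sq hnN Dᵀ hDdiagT ψ hψT hψ0T v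
  have hσle : ∀ k, φ k ≠ 0 → σ ≤ |φ k| := by
    intro k hk
    obtain ⟨h1, h2⟩ := hφ0' k hk
    refine hσ.2 ⟨⟨k, h1⟩, ⟨k, h2⟩, rfl, ?_, ?_⟩
    · rw [hφ k h1 h2]; exact hk
    · rw [hφ k h1 h2]
  -- Part 4
  have part4 : σ * r * Real.sqrt (∑ i, (D.mulVec w.1) i ^ 2 + ∑ j, (Dᵀ.mulVec w.2) j ^ 2) ≤
      r * Real.sqrt (∑ i, (S.mulVec w.1) i ^ 2 + ∑ j, (Sᵀ.mulVec w.2) j ^ 2) := by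
    set tD := ∑ i, (D.mulVec w.1) i ^ 2 + ∑ j, (Dᵀ.mulVec w.2) j ^ 2 with htD
    set tS := ∑ i, (S.mulVec w.1) i ^ 2 + ∑ j, (Sᵀ.mulVec w.2) j ^ 2 with htS
    have htD0 : 0 ≤ tD := by
      apply add_nonneg <;> exact Finset.sum_nonneg fun i _ => sq_nonneg _
    have key : σ ^ 2 * tD ≤ tS := by
      rw [htD, htS, ED, EDT, ES, EST, mul_add, Finset.mul_sum, Finset.mul_sum]
      apply add_le_add <;>
      · apply Finset.sum_le_sum
        intro k _
        rcases hψ01 k with h | h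
        · rw [h]; simp [sq_nonneg]
        · have hφk : φ k ≠ 0 := by
            intro hc; rw [hψdef] at h; simp [hc] at h
          have hs := hσle k hφk
          rw [h, one_mul, mul_pow]
          apply mul_le_mul_of_nonneg_right _ (sq_nonneg _)
          calc σ ^ 2 = |σ| ^ 2 := by rw [abs_of_pos hσpos]
            _ ≤ |φ k| ^ 2 := by
                have : |σ| ≤ |φ k| := by rw [abs_of_pos hσpos]; exact hs
                exact pow_le_pow_left₀ (abs_nonneg σ) this 2
            _ = φ k ^ 2 := sq_abs _
    have h2 : σ * Real.sqrt tD ≤ Real.sqrt tS := by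
      rw [← Real.sqrt_sq hσpos.le, ← Real.sqrt_mul (sq_nonneg σ)]
      exact Real.sqrt_le_sqrt key
    calc σ * r * Real.sqrt tD = r * (σ * Real.sqrt tD) := by ring
      _ ≤ r * Real.sqrt tS := mul_le_mul_of_nonneg_left h2 hr
  -- Part 2
  have part2 : (sInf {d : ℝ | ∃ p ∈ Wstar, d = enorm (w - p)}) ^ 2 =
      ∑ i, (D.mulVec w.1) i ^ 2 + ∑ j, (Dᵀ.mulVec w.2) j ^ 2 := by
    set t := ∑ i, (D.mulVec w.1) i ^ 2 + ∑ j, (Dᵀ.mulVec w.2) j ^ 2 with ht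
    have ht0 : 0 ≤ t := add_nonneg (Finset.sum_nonneg fun i _ => sq_nonneg _)
      (Finset.sum_nonneg fun i _ => sq_nonneg _)
    have hinf : sInf {d : ℝ | ∃ p ∈ Wstar, d = enorm (w - p)} = Real.sqrt t := by
      refine IsLeast.csInf_eq ⟨?_, ?_⟩
      · -- the projection of w onto Wstar achieves the distance
        set x' : Fin n → ℝ := fun j => if φ (j : ℕ) = 0 then w.1 j else 0 with hx'
        set y' : Fin m → ℝ := fun i => if φ (i : ℕ) = 0 then w.2 i else 0 with hy'
        refine ⟨(x', y'), ?_, ?_⟩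
        · rw [part1]
          refine Set.mem_prod.2 ⟨?_, ?_⟩
          · show S.mulVec x' = 0
            apply (mulVec_eq_zero_iff S hdiag x').2
            intro k h1 h2
            rw [hφ k h1 h2]
            by_cases h : φ k = 0 <;> simp [hx', h]
          · show Sᵀ.mulVec y' = 0
            apply (mulVec_eq_zero_iff Sᵀ hdiagT y').2
            intro k h2 h1
            rw [hφT k h2 h1]
            by_cases h : φ k = 0 <;> simp [hy', h]
        · rw [hen]
          congr 1
          rw [ht, ED, EDT]
          simp only [Prod.fst_sub, Prod.snd_sub]
          congr 1
          · rw [sum_sq_eq_range hnN (w.1 - x')]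
            refine Finset.sum_congr rfl fun k _ => ?_
            unfold Stmt3Aux.ext
            split_ifs with h
            · rw [Pi.sub_apply, hx']
              by_cases hk : φ k = 0 <;> simp [hψdef, hk]
            · simp
          · rw [sum_sq_eq_range hmN (w.2 - y')]
            refine Finset.sum_congr rfl fun k _ => ?_
            unfold Stmt3Aux.ext
            split_ifs with h
            · rw [Pi.sub_apply, hy']
              by_cases hk : φ k = 0 <;> simp [hψdef, hk]
            · simp
      · rintro d ⟨p, hpW, rfl⟩
        rw [part1] at hpW
        obtain ⟨hk1, hk2⟩ := Set.mem_prod.1 hpW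
        rw [hen]
        apply Real.sqrt_le_sqrt
        simp only [Prod.fst_sub, Prod.snd_sub]
        rw [ht, ED, EDT, sum_sq_eq_range hnN (w.1 - p.1), sum_sq_eq_range hmN (w.2 - p.2)]
        apply add_le_add <;> apply Finset.sum_le_sum <;> intro k _
        · rcases hψ01 k with h | h
          · rw [h, zero_mul]
            simpa using sq_nonneg _
          · have hφk : φ k ≠ 0 := by
              intro hc; rw [hψdef] at h; simp [hc] at h
            obtain ⟨h1, h2⟩ := hφ0' k hφk
            have hp0 : p.1 ⟨k, h2⟩ = 0 := by
              have hz := (mulVec_eq_zero_iff S hdiag p.1).1 hk1 k h1 h2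
              rw [hφ k h1 h2] at hz
              exact (mul_eq_zero.1 hz).resolve_left hφk
            rw [h, one_mul]
            unfold Stmt3Aux.ext
            rw [dif_pos h2, dif_pos h2, Pi.sub_apply, hp0, sub_zero]
        · rcases hψ01 k with h | h
          · rw [h, zero_mul]
            simpa using sq_nonneg _
          · have hφk : φ k ≠ 0 := by
              intro hc; rw [hψdef] at h; simp [hc] at h
            obtain ⟨h1, h2⟩ := hφ0' k hφk
            have hp0 : p.2 ⟨k, h1⟩ = 0 := by
              have hz := (mulVec_eq_zero_iff Sᵀ hdiagT p.2).1 hk2 k h2 h1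
              rw [hφT k h2 h1] at hz
              exact (mul_eq_zero.1 hz).resolve_left hφk
            rw [h, one_mul]
            unfold Stmt3Aux.ext
            rw [dif_pos h1, dif_pos h1, Pi.sub_apply, hp0, sub_zero]
    rw [hinf, Real.sq_sqrt ht0]
  -- Part 3
  have part3 : sSup {g : ℝ | ∃ p : (Fin n → ℝ) × (Fin m → ℝ),
        enorm (p - w) ≤ r ∧ g = f w.1 p.2 - f p.1 w.2} =
      r * Real.sqrt (∑ i, (S.mulVec w.1) i ^ 2 + ∑ j, (Sᵀ.mulVec w.2) j ^ 2) := by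
    set a := Sᵀ.mulVec w.2 with ha
    set b := S.mulVec w.1 with hb
    set M := Real.sqrt (∑ i, b i ^ 2 + ∑ j, a j ^ 2) with hM
    have hM0 : 0 ≤ M := Real.sqrt_nonneg _
    have hsum0 : 0 ≤ ∑ i, b i ^ 2 + ∑ j, a j ^ 2 :=
      add_nonneg (Finset.sum_nonneg fun i _ => sq_nonneg _)
        (Finset.sum_nonneg fun i _ => sq_nonneg _)
    have hM2 : M ^ 2 = ∑ i, b i ^ 2 + ∑ j, a j ^ 2 := Real.sq_sqrt hsum0
    have hfa : ∀ u : Fin n → ℝ, w.2 ⬝ᵥ S.mulVec u = a ⬝ᵥ u := by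
      intro u
      rw [Matrix.dotProduct_mulVec, ha, Matrix.mulVec_transpose]
    have gform : ∀ p : (Fin n → ℝ) × (Fin m → ℝ),
        f w.1 p.2 - f p.1 w.2 = b ⬝ᵥ (p.2 - w.2) - a ⬝ᵥ (p.1 - w.1) := by
      intro p
      rw [hf, hf, hfa p.1, dotProduct_sub, dotProduct_sub]
      have h1 : b ⬝ᵥ w.2 = a ⬝ᵥ w.1 := by
        rw [dotProduct_comm, hb, hfa w.1]
      have h2 : p.2 ⬝ᵥ b = b ⬝ᵥ p.2 := dotProduct_comm _ _
      linarith [h1, h2]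
    refine IsGreatest.csSup_eq ⟨?_, ?_⟩
    · -- r * M is attained
      by_cases hMz : M = 0
      · refine ⟨w, ?_, ?_⟩
        · rw [sub_self, hen]
          simp only [Prod.fst_zero, Prod.snd_zero, Pi.zero_apply]
          simpa using hr
        · rw [gform, sub_self, sub_self, dotProduct_zero, dotProduct_zero,
            hMz, mul_zero, sub_zero]
      · have hMpos : 0 < M := lt_of_le_of_ne hM0 (Ne.symm hMz)
        set c := r / M with hc
        have hc0 : 0 ≤ c := div_nonneg hr hM0
        refine ⟨(w.1 + c • (-a), w.2 + c • b), ?_, ?_⟩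
        · rw [hen]
          simp only [Prod.fst_sub, Prod.snd_sub]
          have e1 : (w.1 + c • (-a)) - w.1 = c • (-a) := add_sub_cancel_left _ _
          have e2 : (w.2 + c • b) - w.2 = c • b := add_sub_cancel_left _ _
          rw [e1, e2]
          have e3 : ∑ j, (c • (-a)) j ^ 2 = c ^ 2 * ∑ j, a j ^ 2 := by
            rw [Finset.mul_sum]
            refine Finset.sum_congr rfl fun j _ => ?_
            simp only [Pi.smul_apply, Pi.neg_apply, smul_eq_mul]
            ring
          have e4 : ∑ i, (c • b) i ^ 2 = c ^ 2 * ∑ i, b i ^ 2 := by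
            rw [Finset.mul_sum]
            refine Finset.sum_congr rfl fun i _ => ?_
            simp only [Pi.smul_apply, smul_eq_mul]
            ring
          rw [e3, e4, show c ^ 2 * ∑ j, a j ^ 2 + c ^ 2 * ∑ i, b i ^ 2
              = c ^ 2 * (∑ i, b i ^ 2 + ∑ j, a j ^ 2) by ring,
            Real.sqrt_mul (sq_nonneg c), Real.sqrt_sq hc0, ← hM, hc,
            div_mul_cancel₀ r hMz]
        · rw [gform]
          show r * M = b ⬝ᵥ ((w.2 + c • b) - w.2) - a ⬝ᵥ ((w.1 + c • (-a)) - w.1)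
          rw [add_sub_cancel_left, add_sub_cancel_left, dotProduct_smul,
            dotProduct_smul, smul_eq_mul, smul_eq_mul, dotProduct_neg,
            dot_self_eq_sum_sq, dot_self_eq_sum_sq, mul_neg, sub_neg_eq_add, ← mul_add,
            ← hM2, hc, pow_two, ← mul_assoc, div_mul_cancel₀ r hMz]
    · -- upper bound
      rintro g ⟨p, hpr, rfl⟩
      rw [gform]
      set F : Fin n ⊕ Fin m → ℝ := Sum.elim (fun j => -a j) b with hF
      set G : Fin n ⊕ Fin m → ℝ := Sum.elim (fun j => p.1 j - w.1 j) (fun i => p.2 i - w.2 i)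
        with hG
      have hFG : b ⬝ᵥ (p.2 - w.2) - a ⬝ᵥ (p.1 - w.1) = ∑ i, F i * G i := by
        rw [Fintype.sum_sum_type]
        simp only [hF, hG, Sum.elim_inl, Sum.elim_inr, dotProduct, Pi.sub_apply,
          neg_mul, Finset.sum_neg_distrib]
        ring
      have hF2 : ∑ i, F i ^ 2 = ∑ i, b i ^ 2 + ∑ j, a j ^ 2 := by
        rw [Fintype.sum_sum_type]
        simp only [hF, Sum.elim_inl, Sum.elim_inr, neg_sq]
        rw [add_comm]
      have hG2 : ∑ i, G i ^ 2 = ∑ j, (p.1 - w.1) j ^ 2 + ∑ i, (p.2 - w.2) i ^ 2 := by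
        rw [Fintype.sum_sum_type]
        simp [hG]
      have hGenorm : Real.sqrt (∑ i, G i ^ 2) ≤ r := by
        rw [hG2]
        rw [hen] at hpr
        simpa only [Prod.fst_sub, Prod.snd_sub] using hpr
      calc b ⬝ᵥ (p.2 - w.2) - a ⬝ᵥ (p.1 - w.1) = ∑ i, F i * G i := hFG
        _ ≤ Real.sqrt (∑ i, F i ^ 2) * Real.sqrt (∑ i, G i ^ 2) := cauchy_schwarz F G
        _ = M * Real.sqrt (∑ i, G i ^ 2) := by rw [hF2, ← hM]
        _ ≤ M * r := mul_le_mul_of_nonneg_left hGenorm hM0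
        _ = r * M := mul_comm _ _
  exact ⟨part1, part2, part3, part4⟩
end

section
/- Let t* ≥ 2 and let φ be a strictly increasing function. Suppose a sequence (τ_i) of positive reals satisfies, for every i ≥ 2: φ(τ_i − 1) < max{ φ(t* − 2), √(φ(t* − 2)·φ(τ_{i−1})) }, and assume φ is log-concave so that √(φ(a)φ(b)) ≤ φ((a+b)/2). Then τ_i ≤ max{τ_1, t*} for all i, and ∑_{j=1}^∞ (τ_j − t*)⁺ ≤ 2(τ_1 − t*)⁺. -/
/-- Bounding restart epoch lengths (Lemma `bound-large-t`). -/
theorem stmt6 (tstar : ℝ) (htstar : 2 ≤ tstar)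
    (φ : ℝ → ℝ) (hφmono : StrictMono φ)
    (hφlc : ∀ a b : ℝ, Real.sqrt (φ a * φ b) ≤ φ ((a + b) / 2))
    (τ : ℕ → ℝ) (hτpos : ∀ i, 0 < τ i)
    (hrec : ∀ i ≥ 2,
      φ (τ i - 1) < max (φ (tstar - 2)) (Real.sqrt (φ (tstar - 2) * φ (τ (i - 1))))) :
    (∀ i ≥ 1, τ i ≤ max (τ 1) tstar) ∧
    (∀ n : ℕ, ∑ j ∈ Finset.Icc 1 n, max (τ j - tstar) 0 ≤ 2 * max (τ 1 - tstar) 0) := by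
  have key2 : ∀ i ≥ 2, τ i < max (tstar - 1) ((tstar + τ (i - 1)) / 2) := by
    intro i hi
    have h1 := hrec i hi
    have h3 : φ (τ i - 1) < max (φ (tstar - 2)) (φ ((tstar - 2 + τ (i - 1)) / 2)) :=
      h1.trans_le (max_le_max le_rfl (hφlc _ _))
    rw [← hφmono.monotone.map_max] at h3
    have h := hφmono.lt_iff_lt.mp h3
    rcases le_or_gt (tstar - 2) ((tstar - 2 + τ (i - 1)) / 2) with hc | hc
    · rw [max_eq_right hc] at h
      exact lt_max_of_lt_right (by linarith)
    · rw [max_eq_left hc.le] at h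
      exact lt_max_of_lt_left (by linarith)
  have step1 : ∀ i ≥ 2, τ i ≤ max (τ (i - 1)) tstar := by
    intro i hi
    have h := key2 i hi
    have h1 : τ (i - 1) ≤ max (τ (i - 1)) tstar := le_max_left _ _
    have h2 : tstar ≤ max (τ (i - 1)) tstar := le_max_right _ _
    rcases max_cases (tstar - 1) ((tstar + τ (i - 1)) / 2) with ⟨he, _⟩ | ⟨he, _⟩ <;>
      rw [he] at h <;> linarith
  have step2 : ∀ i ≥ 2, max (τ i - tstar) 0 ≤ max (τ (i - 1) - tstar) 0 / 2 := by
    intro i hi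
    have h := key2 i hi
    have h0 : (0 : ℝ) ≤ max (τ (i - 1) - tstar) 0 := le_max_right _ _
    rcases le_or_gt (τ i - tstar) 0 with hc | hc
    · rw [max_eq_right hc]; linarith
    · rw [max_eq_left hc.le]
      have h1 : τ (i - 1) - tstar ≤ max (τ (i - 1) - tstar) 0 := le_max_left _ _
      rcases max_cases (tstar - 1) ((tstar + τ (i - 1)) / 2) with ⟨he, _⟩ | ⟨he, _⟩ <;>
        rw [he] at h <;> linarith
  have part1 : ∀ i ≥ 1, τ i ≤ max (τ 1) tstar := by
    intro i hi
    induction i with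
    | zero => omega
    | succ k ih =>
      rcases Nat.lt_or_ge k 1 with hk | hk
      · interval_cases k
        · exact le_max_left _ _
      · have hk2 : k + 1 ≥ 2 := by omega
        have h := step1 (k + 1) hk2
        simp only [Nat.add_sub_cancel] at h
        have := ih hk
        have h2 : tstar ≤ max (τ 1) tstar := le_max_right _ _
        rcases max_cases (τ k) tstar with ⟨he, _⟩ | ⟨he, _⟩ <;> rw [he] at h <;> linarith
  refine ⟨part1, ?_⟩
  have decay : ∀ j ≥ 1, max (τ j - tstar) 0 ≤ (1 / 2 : ℝ) ^ (j - 1) * max (τ 1 - tstar) 0 := by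
    intro j hj
    induction j with
    | zero => omega
    | succ k ih =>
      rcases Nat.lt_or_ge k 1 with hk | hk
      · interval_cases k
        · simp
      · have hk2 : k + 1 ≥ 2 := by omega
        have h := step2 (k + 1) hk2
        simp only [Nat.add_sub_cancel] at h
        have h2 := ih hk
        have hkk : k + 1 - 1 = k := by omega
        rw [hkk]
        have hpow : (1 / 2 : ℝ) ^ k = (1 / 2 : ℝ) ^ (k - 1) / 2 := by
          obtain ⟨m, rfl⟩ : ∃ m, k = m + 1 := ⟨k - 1, by omega⟩
          simp only [Nat.add_sub_cancel, pow_succ]; ring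
        rw [hpow]
        linarith
  intro n
  have hC : (0 : ℝ) ≤ max (τ 1 - tstar) 0 := le_max_right _ _
  have hgeom : ∀ m : ℕ, ∑ j ∈ Finset.Icc 1 m, (1 / 2 : ℝ) ^ (j - 1)
      = 2 - 2 * (1 / 2 : ℝ) ^ m := by
    intro m
    induction m with
    | zero => simp
    | succ k ih =>
      rw [Finset.sum_Icc_succ_top (by omega : 1 ≤ k + 1), ih]
      have hkk : k + 1 - 1 = k := by omega
      rw [hkk, pow_succ]
      ring
  calc ∑ j ∈ Finset.Icc 1 n, max (τ j - tstar) 0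
      ≤ ∑ j ∈ Finset.Icc 1 n, (1 / 2 : ℝ) ^ (j - 1) * max (τ 1 - tstar) 0 := by
        apply Finset.sum_le_sum
        intro j hj
        exact decay j (Finset.mem_Icc.mp hj).1
    _ = (∑ j ∈ Finset.Icc 1 n, (1 / 2 : ℝ) ^ (j - 1)) * max (τ 1 - tstar) 0 := by
        rw [Finset.sum_mul]
    _ = (2 - 2 * (1 / 2 : ℝ) ^ n) * max (τ 1 - tstar) 0 := by rw [hgeom]
    _ ≤ 2 * max (τ 1 - tstar) 0 := by
        have : (0 : ℝ) ≤ (1 / 2 : ℝ) ^ n := by positivity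
        nlinarith
end
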